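/- Fix integers n ≥ 2 and N ≥ 1, an open set Ω ⊆ (Fin n → ℂ) on which the coordinate functions λ₁,…,λ_n are pairwise distinct, and differentiable functions A_j : Ω → Matrix (Fin N) (Fin N) ℂ whose first partial derivatives are again differentiable, satisfying the Schlesinger system on Ω: ∂A_j/∂λ_k = [A_j,A_k]/(λ_j−λ_k) for j ≠ k and ∂A_j/∂λ_j = −Σ_{k≠j}[A_j,A_k]/(λ_j−λ_k). Define H_j : Ω → ℂ by H_j = Σ_{k≠j} tr(A_j A_k)/(λ_j − λ_k). Then the 1-form Σ_j H_j dλ_j is closed, i.e. for all j, l and all x ∈ Ω: ∂H_j/∂λ_l (x) = ∂H_l/∂λ_j (x). -/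

import Mathlib

attribute [local instance] Matrix.normedAddCommGroup Matrix.normedSpace

/-- Partial derivative (in the `k`-th coordinate) of a function of `n` complex variables. -/
noncomputable def pdv {n : ℕ} {E : Type*} [NormedAddCommGroup E] [NormedSpace ℂ E]
    (k : Fin n) (f : (Fin n → ℂ) → E) (x : Fin n → ℂ) : E :=
  deriv (fun t : ℂ => f (Function.update x k t)) (x k)

noncomputable def entryCLM (N : ℕ) (p q : Fin N) : Matrix (Fin N) (Fin N) ℂ →L[ℂ] ℂ :=
  (ContinuousLinearMap.proj q).comp (ContinuousLinearMap.proj (R := ℂ) (φ := fun _ : Fin N => Fin N → ℂ) p)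

lemma pdv_H {n N : ℕ}
    (Ω : Set (Fin n → ℂ)) (hΩ : IsOpen Ω)
    (hdist : ∀ x ∈ Ω, ∀ j k : Fin n, j ≠ k → x j ≠ x k)
    (A : Fin n → (Fin n → ℂ) → Matrix (Fin N) (Fin N) ℂ)
    (hA : ∀ j, DifferentiableOn ℂ (A j) Ω)
    (hSch₁ : ∀ x ∈ Ω, ∀ j k : Fin n, j ≠ k →
      pdv k (A j) x = (x j - x k)⁻¹ • (A j x * A k x - A k x * A j x))
    (hSch₂ : ∀ x ∈ Ω, ∀ j : Fin n,
      pdv j (A j) x = -∑ k ∈ Finset.univ \ {j},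
        (x j - x k)⁻¹ • (A j x * A k x - A k x * A j x))
    (j l : Fin n) (hjl : j ≠ l) (x : Fin n → ℂ) (hx : x ∈ Ω) :
    pdv l (fun y => ∑ k ∈ Finset.univ \ {j}, (y j - y k)⁻¹ * (A j y * A k y).trace) x
      = (x j - x l)⁻¹ * (x j - x l)⁻¹ * (A j x * A l x).trace := by
  classical
  have hxmem : Ω ∈ nhds x := hΩ.mem_nhds hx
  set M : Fin n → Matrix (Fin N) (Fin N) ℂ := fun a => A a x with hM
  set M' : Fin n → Matrix (Fin N) (Fin N) ℂ := fun a => pdv l (A a) x with hM'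
  have hupd : Function.update x l (x l) = x := Function.update_eq_self l x
  -- derivative of t ↦ A a (update x l t)
  have hg : ∀ a, HasDerivAt (fun t => A a (Function.update x l t)) (M' a) (x l) := by
    intro a
    have h1 : DifferentiableAt ℂ (A a) (Function.update x l (x l)) := by
      rw [hupd]; exact (hA a).differentiableAt hxmem
    have h2 : DifferentiableAt ℂ (fun t => A a (Function.update x l t)) (x l) :=
      h1.comp (x l) (hasDerivAt_update x l (x l)).differentiableAt
    exact h2.hasDerivAt
  have hge : ∀ a (p q : Fin N),
      HasDerivAt (fun t => A a (Function.update x l t) p q) (M' a p q) (x l) :=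
    fun a p q => (entryCLM N p q).hasFDerivAt.comp_hasDerivAt _ (hg a)
  -- derivative of the trace of a product
  have htr : ∀ a b : Fin n,
      HasDerivAt (fun t => (A a (Function.update x l t) * A b (Function.update x l t)).trace)
        ((M' a * M b).trace + (M a * M' b).trace) (x l) := by
    intro a b
    have h : HasDerivAt (fun t => ∑ p : Fin N, ∑ q : Fin N,
          A a (Function.update x l t) p q * A b (Function.update x l t) q p)
        (∑ p : Fin N, ∑ q : Fin N, (M' a p q * M b q p + M a p q * M' b q p)) (x l) :=
      HasDerivAt.fun_sum (fun p _ => HasDerivAt.fun_sum (fun q _ => by have h2 := (hge a p q).mul (hge b q p); rwa [hupd] at h2))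
    have heq : (fun t => (A a (Function.update x l t) * A b (Function.update x l t)).trace)
        = fun t => ∑ p : Fin N, ∑ q : Fin N,
            A a (Function.update x l t) p q * A b (Function.update x l t) q p := by
      funext t; simp [Matrix.trace, Matrix.diag, Matrix.mul_apply]
    rw [heq]
    convert h using 1
    simp [Matrix.trace, Matrix.diag, Matrix.mul_apply, Finset.sum_add_distrib]
  -- nonvanishing denominators
  have hne : ∀ k : Fin n, k ≠ j → (x j - x k) ≠ 0 :=
    fun k hk => sub_ne_zero.2 (hdist x hx j k (Ne.symm hk))
  have hlj : l ≠ j := Ne.symm hjl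
  have hlmem : l ∈ Finset.univ \ {j} := by simp [hlj]
  set E : Finset (Fin n) := (Finset.univ \ {j}).erase l with hE
  -- rewrite the function of t
  have hfun : (fun t => ∑ k ∈ Finset.univ \ {j},
        (Function.update x l t j - Function.update x l t k)⁻¹ *
          (A j (Function.update x l t) * A k (Function.update x l t)).trace)
      = fun t => (x j - t)⁻¹ *
            (A j (Function.update x l t) * A l (Function.update x l t)).trace
          + ∑ k ∈ E, (x j - x k)⁻¹ *
            (A j (Function.update x l t) * A k (Function.update x l t)).trace := by
    funext t
    rw [← Finset.add_sum_erase _ _ hlmem]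
    congr 1
    · rw [Function.update_of_ne hjl, Function.update_self]
    · refine Finset.sum_congr rfl (fun k hk => ?_)
      have hkl : k ≠ l := (Finset.mem_erase.1 hk).1
      rw [Function.update_of_ne hjl, Function.update_of_ne hkl]
  -- derivative of the whole sum
  have hder : HasDerivAt (fun t => ∑ k ∈ Finset.univ \ {j},
        (Function.update x l t j - Function.update x l t k)⁻¹ *
          (A j (Function.update x l t) * A k (Function.update x l t)).trace)
      ((-(-1) / (x j - x l) ^ 2) * (M j * M l).trace
          + (x j - x l)⁻¹ * ((M' j * M l).trace + (M j * M' l).trace)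
        + ∑ k ∈ E, (0 * ((A j x * A k x).trace)
          + (x j - x k)⁻¹ * ((M' j * M k).trace + (M j * M' k).trace))) (x l) := by
    rw [hfun]
    have hu : HasDerivAt (fun t : ℂ => x j - t) (-1) (x l) :=
      (hasDerivAt_id (x l)).const_sub (x j)
    have hui : HasDerivAt (fun t : ℂ => (x j - t)⁻¹) (-(-1) / (x j - x l) ^ 2) (x l) := by
      have := hu.inv (by simpa using hne l hlj)
      exact this
    have h1 := hui.mul (htr j l)
    have h2 : HasDerivAt (fun t => ∑ k ∈ E, (x j - x k)⁻¹ *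
        (A j (Function.update x l t) * A k (Function.update x l t)).trace)
        (∑ k ∈ E, (0 * ((A j x * A k x).trace)
          + (x j - x k)⁻¹ * ((M' j * M k).trace + (M j * M' k).trace))) (x l) := by
      refine HasDerivAt.fun_sum (fun k hk => ?_)
      have := (hasDerivAt_const (x l) ((x j - x k)⁻¹)).mul (htr j k)
      rwa [hupd] at this
    have h3 := h1.add h2
    rwa [hupd] at h3
  have hpdv : pdv l (fun y => ∑ k ∈ Finset.univ \ {j},
        (y j - y k)⁻¹ * (A j y * A k y).trace) x
      = (-(-1) / (x j - x l) ^ 2) * (M j * M l).trace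
          + (x j - x l)⁻¹ * ((M' j * M l).trace + (M j * M' l).trace)
        + ∑ k ∈ E, (0 * ((A j x * A k x).trace)
          + (x j - x k)⁻¹ * ((M' j * M k).trace + (M j * M' k).trace)) := hder.deriv
  rw [hpdv]
  -- Schlesinger substitutions
  have hSj : M' j = (x j - x l)⁻¹ • (M j * M l - M l * M j) := hSch₁ x hx j l hjl
  have hSl : M' l = -∑ m ∈ Finset.univ \ {l},
      (x l - x m)⁻¹ • (M l * M m - M m * M l) := hSch₂ x hx l
  have ht1 : (M' j * M l).trace = 0 := by
    rw [hSj, smul_mul_assoc, Matrix.trace_smul, sub_mul, Matrix.trace_sub,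
      Matrix.trace_mul_cycle (M j) (M l) (M l)]
    simp
  have ht4 : ∀ k : Fin n, (M' j * M k).trace
      = (x j - x l)⁻¹ * ((M j * M l * M k).trace - (M j * M k * M l).trace) := by
    intro k
    rw [hSj, smul_mul_assoc, Matrix.trace_smul, sub_mul, Matrix.trace_sub,
      Matrix.trace_mul_cycle (M l) (M j) (M k), Matrix.trace_mul_cycle (M k) (M l) (M j),
      smul_eq_mul]
  have ht2 : ∀ k ∈ E, (M j * M' k).trace
      = (x k - x l)⁻¹ * ((M j * M k * M l).trace - (M j * M l * M k).trace) := by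
    intro k hk
    have hkl : k ≠ l := (Finset.mem_erase.1 hk).1
    rw [show M' k = (x k - x l)⁻¹ • (M k * M l - M l * M k) from hSch₁ x hx k l hkl,
      mul_smul_comm, Matrix.trace_smul, mul_sub, Matrix.trace_sub,
      ← Matrix.mul_assoc, ← Matrix.mul_assoc, smul_eq_mul]
  have hjmem : j ∈ Finset.univ \ {l} := by simp [hjl]
  have hEE : (Finset.univ \ {l}).erase j = E := by
    ext k; simp only [hE, Finset.mem_erase, Finset.mem_sdiff, Finset.mem_univ, true_and,
      Finset.mem_singleton]; tauto
  have ht3 : (M j * M' l).trace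
      = -∑ k ∈ E, (x l - x k)⁻¹ * ((M j * M l * M k).trace - (M j * M k * M l).trace) := by
    rw [hSl, mul_neg, Matrix.trace_neg, Matrix.mul_sum, Matrix.trace_sum]
    congr 1
    rw [← Finset.add_sum_erase _ _ hjmem, hEE]
    have hz : (M j * ((x l - x j)⁻¹ • (M l * M j - M j * M l))).trace = 0 := by
      rw [mul_smul_comm, Matrix.trace_smul, mul_sub, Matrix.trace_sub, ← Matrix.mul_assoc,
        ← Matrix.mul_assoc, Matrix.trace_mul_cycle (M j) (M l) (M j)]
      simp
    rw [hz, zero_add]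
    refine Finset.sum_congr rfl fun k hk => ?_
    rw [mul_smul_comm, Matrix.trace_smul, mul_sub, Matrix.trace_sub, ← Matrix.mul_assoc,
      ← Matrix.mul_assoc, smul_eq_mul]
  have hsum : ∑ k ∈ E, (0 * (A j x * A k x).trace
        + (x j - x k)⁻¹ * ((M' j * M k).trace + (M j * M' k).trace))
      = ∑ k ∈ E, (x j - x k)⁻¹ * ((x j - x l)⁻¹ *
            ((M j * M l * M k).trace - (M j * M k * M l).trace)
          + (x k - x l)⁻¹ * ((M j * M k * M l).trace - (M j * M l * M k).trace)) := by
    refine Finset.sum_congr rfl fun k hk => ?_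
    rw [ht4 k, ht2 k hk, zero_mul, zero_add]
  rw [ht1, ht3, hsum, zero_add, mul_neg, Finset.mul_sum]
  have hS : ∑ k ∈ E, (x j - x l)⁻¹ * ((x l - x k)⁻¹ *
        ((M j * M l * M k).trace - (M j * M k * M l).trace))
      = ∑ k ∈ E, (x j - x k)⁻¹ * ((x j - x l)⁻¹ *
            ((M j * M l * M k).trace - (M j * M k * M l).trace)
          + (x k - x l)⁻¹ * ((M j * M k * M l).trace - (M j * M l * M k).trace)) := by
    refine Finset.sum_congr rfl fun k hk => ?_
    have hkl : k ≠ l := (Finset.mem_erase.1 hk).1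
    have hkj : k ≠ j := by
      have := (Finset.mem_sdiff.1 ((Finset.mem_erase.1 hk).2)).2
      simpa using this
    have h1 : x j - x l ≠ 0 := hne l hlj
    have h2 : x j - x k ≠ 0 := hne k hkj
    have h3 : x k - x l ≠ 0 := sub_ne_zero.2 (hdist x hx k l hkl)
    have h4 : x l - x k ≠ 0 := sub_ne_zero.2 (hdist x hx l k (Ne.symm hkl))
    field_simp
    ring
  rw [hS, add_assoc, neg_add_cancel, add_zero,
    show (M j * M l).trace = (A j x * A l x).trace from rfl, neg_neg, one_div, sq, mul_inv]

/-- For a solution of the Schlesinger system, the 1-form `Σ_j H_j dλ_j` with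
`H_j = Σ_{k≠j} tr(A_jA_k)/(λ_j−λ_k)` is closed; hence the Jimbo–Miwa
τ-function is locally well defined. -/
theorem tau_form_closed {n N : ℕ} (hn : 2 ≤ n) (hN : 1 ≤ N)
    (Ω : Set (Fin n → ℂ)) (hΩ : IsOpen Ω)
    (hdist : ∀ x ∈ Ω, ∀ j k : Fin n, j ≠ k → x j ≠ x k)
    (A : Fin n → (Fin n → ℂ) → Matrix (Fin N) (Fin N) ℂ)
    (hA : ∀ j, DifferentiableOn ℂ (A j) Ω)
    (hA' : ∀ j k : Fin n, DifferentiableOn ℂ (pdv k (A j)) Ω)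
    (hSch₁ : ∀ x ∈ Ω, ∀ j k : Fin n, j ≠ k →
      pdv k (A j) x = (x j - x k)⁻¹ • (A j x * A k x - A k x * A j x))
    (hSch₂ : ∀ x ∈ Ω, ∀ j : Fin n,
      pdv j (A j) x = -∑ k ∈ Finset.univ \ {j},
        (x j - x k)⁻¹ • (A j x * A k x - A k x * A j x))
    (H : Fin n → (Fin n → ℂ) → ℂ)
    (hH : ∀ j x, H j x = ∑ k ∈ Finset.univ \ {j},
      (x j - x k)⁻¹ * (A j x * A k x).trace) :
    ∀ j l : Fin n, ∀ x ∈ Ω, pdv l (H j) x = pdv j (H l) x := by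
  intro j l x hx
  rcases eq_or_ne j l with rfl | hjl
  · rfl
  · have hHj : H j = fun y => ∑ k ∈ Finset.univ \ {j},
        (y j - y k)⁻¹ * (A j y * A k y).trace := funext (hH j)
    have hHl : H l = fun y => ∑ k ∈ Finset.univ \ {l},
        (y l - y k)⁻¹ * (A l y * A k y).trace := funext (hH l)
    rw [hHj, hHl, pdv_H Ω hΩ hdist A hA hSch₁ hSch₂ j l hjl x hx,
      pdv_H Ω hΩ hdist A hA hSch₁ hSch₂ l j hjl.symm x hx,
      Matrix.trace_mul_comm, show (x l - x j) = -(x j - x l) from by ring, inv_neg]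
    ring
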